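/- Consider a heterogeneous game Γ(n,T,x,y,z) with y + z ≠ 0. If α* is a symmetric Nash equilibrium and i, j ∈ T satisfy 0 < α*_i < 1 and 0 < α*_j < 1, then α*_i = α*_j. -/

import Mathlib

open Finset

noncomputable def U {T : Type*} [Fintype T] (n : ℕ) (x : T → ℝ) (y z : ℝ)
    (α β : T → ℝ) : ℝ :=
  z * ∑ j, x j * β j +
    ∑ j, (x j / ((n : ℝ) - 1)) *
      (((n : ℝ) - 1) * y + (y + z) * β j - (n : ℝ) * (y + z) * ∑ i, x i * β i) * α j

def IsStrategy {T : Type*} (α : T → ℝ) : Prop :=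
  ∀ t, α t ∈ Set.Icc (0 : ℝ) 1

def IsSymNash {T : Type*} [Fintype T] (n : ℕ) (x : T → ℝ) (y z : ℝ)
    (α : T → ℝ) : Prop :=
  IsStrategy α ∧ ∀ β : T → ℝ, IsStrategy β → U n x y z β α ≤ U n x y z α α

lemma sum_update_mul {T : Type*} [Fintype T] [DecidableEq T] (g α : T → ℝ) (i : T) (v : ℝ) :
    ∑ t, g t * Function.update α i v t = (∑ t, g t * α t) + g i * (v - α i) := by
  rw [← Finset.sum_erase_add _ _ (Finset.mem_univ i)]
  have h2 : ∑ t, g t * α t = (∑ t ∈ Finset.univ.erase i, g t * α t) + g i * α i :=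
    (Finset.sum_erase_add _ _ (Finset.mem_univ i)).symm
  rw [h2]
  have : ∑ t ∈ Finset.univ.erase i, g t * Function.update α i v t
      = ∑ t ∈ Finset.univ.erase i, g t * α t := by
    refine Finset.sum_congr rfl fun t ht => ?_
    rw [Function.update_of_ne (Finset.ne_of_mem_erase ht)]
  rw [this, Function.update_self]
  ring

theorem stmt4 {T : Type*} [Fintype T] (hT : 2 ≤ Fintype.card T)
    (n : ℕ) (x : T → ℝ) (hx : ∑ t, x t = 1)
    (hxt : ∀ t : T, 1 < (n : ℝ) * x t ∧ (n : ℝ) * x t < n)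
    (y z : ℝ) (hyz : y + z ≠ 0) (α : T → ℝ) (hNE : IsSymNash n x y z α)
    (i j : T) (hi0 : 0 < α i) (hi1 : α i < 1) (hj0 : 0 < α j) (hj1 : α j < 1) :
    α i = α j := by
  classical
  obtain ⟨hstrat, hnash⟩ := hNE
  have hn1 : (1 : ℝ) < n := lt_trans (hxt i).1 (hxt i).2
  have hn0 : (0 : ℝ) < (n : ℝ) - 1 := by linarith
  set S := ∑ t, x t * α t with hS
  set c : T → ℝ := fun t => (x t / ((n : ℝ) - 1)) *
      (((n : ℝ) - 1) * y + (y + z) * α t - (n : ℝ) * (y + z) * S) with hc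
  -- key: for interior t, c t = 0
  have key : ∀ t, 0 < α t → α t < 1 → c t = 0 := by
    intro t ht0 ht1
    have hdev : ∀ v : ℝ, 0 ≤ v → v ≤ 1 → c t * (v - α t) ≤ 0 := by
      intro v hv0 hv1
      have hβ : IsStrategy (Function.update α t v) := by
        intro s
        by_cases hs : s = t
        · subst hs; rw [Function.update_self]; exact ⟨hv0, hv1⟩
        · rw [Function.update_of_ne hs]; exact hstrat s
      have := hnash _ hβ
      unfold U at this
      have h1 : ∑ s, c s * Function.update α t v s ≤ ∑ s, c s * α s := by
        have e1 : ∀ β : T → ℝ, ∑ s, (x s / ((n : ℝ) - 1)) *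
            (((n : ℝ) - 1) * y + (y + z) * α s - (n : ℝ) * (y + z) * ∑ k, x k * α k) * β s
            = ∑ s, c s * β s := by
          intro β; exact Finset.sum_congr rfl fun s _ => by simp only [hc, ← hS]
        rw [e1, e1] at this
        linarith
      rw [sum_update_mul] at h1
      linarith
    have h1 := hdev 0 le_rfl zero_le_one
    have h2 := hdev 1 zero_le_one le_rfl
    rcases lt_trichotomy (c t) 0 with h | h | h
    · nlinarith
    · exact h
    · nlinarith
  have hxi : 0 < x i := by nlinarith [(hxt i).1]
  have hxj : 0 < x j := by nlinarith [(hxt j).1]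
  have hci := key i hi0 hi1
  have hcj := key j hj0 hj1
  rw [hc] at hci hcj
  simp only [mul_eq_zero, div_eq_zero_iff] at hci hcj
  have hi' : ((n : ℝ) - 1) * y + (y + z) * α i - (n : ℝ) * (y + z) * S = 0 := by
    rcases hci with (h | h) | h
    · exact absurd h (ne_of_gt hxi)
    · linarith
    · exact h
  have hj' : ((n : ℝ) - 1) * y + (y + z) * α j - (n : ℝ) * (y + z) * S = 0 := by
    rcases hcj with (h | h) | h
    · exact absurd h (ne_of_gt hxj)
    · linarith
    · exact h
  have : (y + z) * (α i - α j) = 0 := by linarith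
  rcases mul_eq_zero.mp this with h | h
  · exact absurd h hyz
  · linarith
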